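/- The function x ↦ (∫_{(0,x)} μ(s) ds)·(∫_{(x,L)} μ(s)⁻¹ ds), with values in [0,∞], tends to 0 as x → L from the left (as x → +∞ when L = ∞) if and only if lim_{n→∞} (Σ_{k=0}^n s_k s_{k+1} ℓ_k)·(Σ_{k=n}^∞ ℓ_k/(s_k s_{k+1})) = 0 in [0,∞]. -/

import Mathlib

open MeasureTheory Filter Topology
open scoped ENNReal Classical

private noncomputable def cc (s : ℕ → ℕ) (n : ℕ) : ℝ := (s n : ℝ) * (s (n + 1) : ℝ)

private lemma cc_pos {s : ℕ → ℕ} (hs : ∀ n, 1 ≤ s n) (n : ℕ) : 0 < cc s n :=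
  mul_pos (by exact_mod_cast hs n) (by exact_mod_cast hs (n + 1))

private noncomputable def PP (s : ℕ → ℕ) (ℓ : ℕ → ℝ) (n : ℕ) : ℝ≥0∞ :=
  ∑ k ∈ Finset.range n, ENNReal.ofReal (cc s k * ℓ k)

private noncomputable def QQ (s : ℕ → ℕ) (ℓ : ℕ → ℝ) (n : ℕ) : ℝ≥0∞ :=
  ∑' k, ENNReal.ofReal (ℓ (n + k) / cc s (n + k))

private noncomputable def Phi (L : ℝ≥0∞) (μ : ℝ → ℝ) (x : ℝ) : ℝ≥0∞ :=
  (∫⁻ y in Set.Ioo 0 x, ENNReal.ofReal (μ y)) *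
    (∫⁻ y in {y : ℝ | x < y ∧ ENNReal.ofReal y < L}, ENNReal.ofReal ((μ y)⁻¹))

private lemma aeq_of_subsets {S U : Set ℝ} {a : ℝ} (h1 : S ⊆ U) (h2 : U ⊆ S ∪ {a}) :
    S =ᵐ[volume] U := by
  rw [← measure_symmDiff_eq_zero_iff]
  refine measure_mono_null ?_ (measure_singleton a)
  intro x hx
  rcases hx with h | h
  · exact absurd (h1 h.1) h.2
  · rcases h2 h.1 with h' | h'
    · exact absurd h' h.2
    · exact h'

/-- analytic content of Theorem 5.3, Kac–Krein discreteness
criterion.  The Kac–Krein function `Φ(x) = ∫₀ˣ μ · ∫ₓᴸ 1/μ` tends to `0` as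
`x → L⁻` (as `x → +∞` when `L = ∞`) iff
`(Σ_{k ≤ n} sₖ sₖ₊₁ ℓₖ)(Σ_{k ≥ n} ℓₖ/(sₖ sₖ₊₁)) → 0`. -/
theorem kacKrein_tendsto_zero_iff (s : ℕ → ℕ) (hs : ∀ n, 1 ≤ s n)
    (ℓ : ℕ → ℝ) (hℓ : ∀ n, 0 < ℓ n)
    (t : ℕ → ℝ) (ht0 : t 0 = 0) (htrec : ∀ n, t (n + 1) = t n + ℓ n)
    (L : ℝ≥0∞) (hL : L = ∑' n, ENNReal.ofReal (ℓ n))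
    (μ : ℝ → ℝ)
    (hμ : ∀ n : ℕ, ∀ x ∈ Set.Ico (t n) (t (n + 1)), μ x = (s n : ℝ) * (s (n + 1) : ℝ))
    (hμout : ∀ x : ℝ, (x < 0 ∨ L ≤ ENNReal.ofReal x) → μ x = 1) :
    Tendsto
      (fun x : ℝ =>
        (∫⁻ y in Set.Ioo 0 x, ENNReal.ofReal (μ y)) *
          (∫⁻ y in {y : ℝ | x < y ∧ ENNReal.ofReal y < L}, ENNReal.ofReal ((μ y)⁻¹)))
      (if L = ∞ then atTop else 𝓝[<] L.toReal) (𝓝 0) ↔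
    Tendsto
      (fun n : ℕ =>
        (∑ k ∈ Finset.range (n + 1), ENNReal.ofReal ((s k : ℝ) * (s (k + 1) : ℝ) * ℓ k)) *
          (∑' k : ℕ, ENNReal.ofReal (ℓ (n + k) / ((s (n + k) : ℝ) * (s (n + k + 1) : ℝ)))))
      atTop (𝓝 0) := by
  have hcpos : ∀ n, 0 < cc s n := cc_pos hs
  have hgoal1 : (fun x : ℝ =>
      (∫⁻ y in Set.Ioo 0 x, ENNReal.ofReal (μ y)) *
        (∫⁻ y in {y : ℝ | x < y ∧ ENNReal.ofReal y < L}, ENNReal.ofReal ((μ y)⁻¹)))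
      = Phi L μ := rfl
  have hgoal2 : (fun n : ℕ =>
      (∑ k ∈ Finset.range (n + 1), ENNReal.ofReal ((s k : ℝ) * (s (k + 1) : ℝ) * ℓ k)) *
        (∑' k : ℕ, ENNReal.ofReal (ℓ (n + k) / ((s (n + k) : ℝ) * (s (n + k + 1) : ℝ)))))
      = fun n => PP s ℓ (n + 1) * QQ s ℓ n := rfl
  rw [hgoal1, hgoal2]
  -- basic facts about t
  have tmono : StrictMono t := strictMono_nat_of_lt_succ fun n => by
    rw [htrec]; linarith [hℓ n]
  have tnn : ∀ n, 0 ≤ t n := fun n => ht0 ▸ tmono.monotone (Nat.zero_le n)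
  have tsum_eq : ∀ n, ENNReal.ofReal (t n) = ∑ k ∈ Finset.range n, ENNReal.ofReal (ℓ k) := by
    intro n
    induction n with
    | zero => simp [ht0]
    | succ n ih =>
      rw [htrec, ENNReal.ofReal_add (tnn n) (hℓ n).le, Finset.sum_range_succ, ih]
  have tlim : Tendsto (fun n => ENNReal.ofReal (t n)) atTop (𝓝 L) := by
    rw [hL]
    simpa only [tsum_eq] using ENNReal.tendsto_nat_tsum fun k => ENNReal.ofReal (ℓ k)
  have tltL : ∀ n, ENNReal.ofReal (t n) < L := by
    intro n
    calc ENNReal.ofReal (t n) < ENNReal.ofReal (t n) + ENNReal.ofReal (ℓ n) :=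
          ENNReal.lt_add_right ENNReal.ofReal_ne_top (ENNReal.ofReal_pos.2 (hℓ n)).ne'
      _ = ∑ k ∈ Finset.range (n + 1), ENNReal.ofReal (ℓ k) := by
          rw [Finset.sum_range_succ, tsum_eq]
      _ ≤ L := hL ▸ ENNReal.sum_le_tsum _
  have exidx : ∀ y : ℝ, 0 ≤ y → ENNReal.ofReal y < L → ∃ n, t n ≤ y ∧ y < t (n + 1) := by
    intro y hy hyL
    have hne : ∃ m, y < t m := by
      obtain ⟨m, hm⟩ := (tlim.eventually (lt_mem_nhds hyL)).exists
      refine ⟨m, ?_⟩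
      by_contra h
      exact absurd (ENNReal.ofReal_le_ofReal (not_lt.1 h)) (not_le.2 hm)
    have hm0 : y < t (Nat.find hne) := Nat.find_spec hne
    have hm0pos : Nat.find hne ≠ 0 := by
      intro h
      rw [h, ht0] at hm0
      exact absurd hy (not_le.2 hm0)
    obtain ⟨n, hn⟩ := Nat.exists_eq_succ_of_ne_zero hm0pos
    refine ⟨n, not_lt.1 fun h => ?_, by rw [← Nat.succ_eq_add_one, ← hn]; exact hm0⟩
    exact absurd (Nat.find_min hne (hn ▸ Nat.lt_succ_self n)) (not_not.2 h)
  -- constant integrals on the intervals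
  have hIcoμ : ∀ n, ∫⁻ y in Set.Ico (t n) (t (n + 1)), ENNReal.ofReal (μ y)
      = ENNReal.ofReal (cc s n * ℓ n) := by
    intro n
    have h1 : ∫⁻ y in Set.Ico (t n) (t (n + 1)), ENNReal.ofReal (μ y)
        = ∫⁻ _ in Set.Ico (t n) (t (n + 1)), ENNReal.ofReal (cc s n) :=
      setLIntegral_congr_fun measurableSet_Ico
        (fun y hy => by rw [hμ n y hy]; rfl)
    rw [h1, setLIntegral_const, Real.volume_Ico, htrec n,
      ← ENNReal.ofReal_mul (hcpos n).le]
    congr 1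
    ring
  have hIcoInv : ∀ n, ∫⁻ y in Set.Ico (t n) (t (n + 1)), ENNReal.ofReal ((μ y)⁻¹)
      = ENNReal.ofReal (ℓ n / cc s n) := by
    intro n
    have h1 : ∫⁻ y in Set.Ico (t n) (t (n + 1)), ENNReal.ofReal ((μ y)⁻¹)
        = ∫⁻ _ in Set.Ico (t n) (t (n + 1)), ENNReal.ofReal ((cc s n)⁻¹) :=
      setLIntegral_congr_fun measurableSet_Ico
        (fun y hy => by rw [hμ n y hy]; rfl)
    rw [h1, setLIntegral_const, Real.volume_Ico, htrec n,
      ← ENNReal.ofReal_mul (inv_nonneg.2 (hcpos n).le)]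
    congr 1
    rw [add_sub_cancel_left, inv_mul_eq_div]
  -- value of the first integral at the break points
  have hA : ∀ n, ∫⁻ y in Set.Ioo 0 (t n), ENNReal.ofReal (μ y) = PP s ℓ n := by
    have base : ∀ n, ∫⁻ y in Set.Ico 0 (t n), ENNReal.ofReal (μ y) = PP s ℓ n := by
      intro n
      induction n with
      | zero => rw [ht0]; simp [PP]
      | succ n ih =>
        rw [← Set.Ico_union_Ico_eq_Ico (tnn n) (tmono.monotone (Nat.le_succ n)),
          lintegral_union measurableSet_Ico
            (Set.disjoint_left.2 fun x hx hx' => absurd hx'.1 (not_le.2 hx.2)),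
          ih, hIcoμ n]
        simp [PP, Finset.sum_range_succ]
    intro n
    rw [setLIntegral_congr Ioo_ae_eq_Ico]
    exact base n
  -- the second integral at break points
  have keydisj : ∀ i j : ℕ, i < j →
      Disjoint (Set.Ico (t i) (t (i + 1))) (Set.Ico (t j) (t (j + 1))) := by
    intro i j hij
    refine Set.disjoint_left.2 ?_
    rintro x ⟨_, hx2⟩ ⟨hx3, _⟩
    exact absurd ((hx2.trans_le (tmono.monotone hij)).trans_le hx3) (lt_irrefl x)
  have hUae : ∀ n, ({y : ℝ | t n < y ∧ ENNReal.ofReal y < L} : Set ℝ)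
      =ᵐ[volume] ⋃ k, Set.Ico (t (n + k)) (t (n + k + 1)) := by
    intro n
    refine aeq_of_subsets (a := t n) ?_ ?_
    · rintro y ⟨hy1, hy2⟩
      obtain ⟨m, hm1, hm2⟩ := exidx y ((tnn n).trans hy1.le) hy2
      have hnm : n ≤ m := by
        by_contra h
        push_neg at h
        exact absurd (hm2.trans_le (tmono.monotone (Nat.succ_le_of_lt h)))
          (not_lt.2 hy1.le)
      obtain ⟨k, rfl⟩ := Nat.exists_eq_add_of_le hnm
      exact Set.mem_iUnion.2 ⟨k, hm1, hm2⟩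
    · rintro y hy
      obtain ⟨k, hk1, hk2⟩ := Set.mem_iUnion.1 hy
      have hyL : ENNReal.ofReal y < L :=
        lt_of_le_of_lt (ENNReal.ofReal_le_ofReal hk2.le) (tltL _)
      have hty : t n ≤ y := (tmono.monotone (Nat.le_add_right n k)).trans hk1
      rcases hty.lt_or_eq with h | h
      · exact Or.inl ⟨h, hyL⟩
      · exact Or.inr (by simp [← h])
  have hB : ∀ n, ∫⁻ y in {y : ℝ | t n < y ∧ ENNReal.ofReal y < L},
      ENNReal.ofReal ((μ y)⁻¹) = QQ s ℓ n := by
    intro n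
    rw [setLIntegral_congr (hUae n),
      lintegral_iUnion (fun k => measurableSet_Ico) ?_]
    · exact tsum_congr fun k => hIcoInv (n + k)
    · intro i j hij
      rcases hij.lt_or_gt with h | h
      · exact keydisj _ _ (by omega)
      · exact (keydisj _ _ (by omega)).symm
  -- algebraic facts about PP and QQ
  have Qshift : ∀ n, QQ s ℓ n = ENNReal.ofReal (ℓ n / cc s n) + QQ s ℓ (n + 1) := by
    intro n
    simp only [QQ]
    rw [tsum_eq_zero_add' ENNReal.summable]
    congr 1
    exact tsum_congr fun k => by rw [show n + (k + 1) = n + 1 + k from by omega]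
  have Psucc : ∀ n, PP s ℓ (n + 1) = PP s ℓ n + ENNReal.ofReal (cc s n * ℓ n) := by
    intro n; simp [PP, Finset.sum_range_succ]
  -- the key upper bound for the discrete quantity
  have key : ∀ n, PP s ℓ (n + 1) * QQ s ℓ n
      ≤ PP s ℓ n * QQ s ℓ n + 2 * (PP s ℓ (n + 1) * QQ s ℓ (n + 1))
        + ENNReal.ofReal (ℓ n ^ 2) := by
    intro n
    have hq : ENNReal.ofReal (ℓ n / cc s n) ≤ QQ s ℓ n := (Qshift n) ▸ le_self_add
    have hPle : PP s ℓ n ≤ PP s ℓ (n + 1) := (Psucc n) ▸ le_self_add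
    have hPe : ENNReal.ofReal (cc s n * ℓ n) ≤ PP s ℓ (n + 1) := (Psucc n) ▸ le_add_self
    have heq : ENNReal.ofReal (cc s n * ℓ n) * ENNReal.ofReal (ℓ n / cc s n)
        = ENNReal.ofReal (ℓ n ^ 2) := by
      rw [← ENNReal.ofReal_mul (mul_nonneg (hcpos n).le (hℓ n).le)]
      congr 1
      have hne : cc s n ≠ 0 := (hcpos n).ne'
      field_simp
    calc PP s ℓ (n + 1) * QQ s ℓ n
        = PP s ℓ n * ENNReal.ofReal (ℓ n / cc s n) + PP s ℓ n * QQ s ℓ (n + 1)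
          + (ENNReal.ofReal (cc s n * ℓ n) * ENNReal.ofReal (ℓ n / cc s n)
            + ENNReal.ofReal (cc s n * ℓ n) * QQ s ℓ (n + 1)) := by
          rw [Psucc n, Qshift n]; ring
      _ ≤ PP s ℓ n * QQ s ℓ n + PP s ℓ (n + 1) * QQ s ℓ (n + 1)
          + (ENNReal.ofReal (ℓ n ^ 2) + PP s ℓ (n + 1) * QQ s ℓ (n + 1)) := by
          refine add_le_add (add_le_add (mul_le_mul_right hq _)
            (mul_le_mul_left hPle _)) (add_le_add ?_ (mul_le_mul_left hPe _))
          rw [heq]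
      _ = PP s ℓ n * QQ s ℓ n + 2 * (PP s ℓ (n + 1) * QQ s ℓ (n + 1))
          + ENNReal.ofReal (ℓ n ^ 2) := by
          ring
  -- the filter facts
  have tltR : L ≠ ∞ → ∀ n, t n < L.toReal := fun hT n =>
    (ENNReal.ofReal_lt_iff_lt_toReal (tnn n) hT).1 (tltL n)
  have tF : Tendsto t atTop (if L = ∞ then atTop else 𝓝[<] L.toReal) := by
    split_ifs with hT
    · refine tendsto_atTop.2 fun b => ?_
      have hmem : {z : ℝ≥0∞ | ENNReal.ofReal b < z} ∈ 𝓝 L :=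
        lt_mem_nhds (hT ▸ ENNReal.ofReal_lt_top)
      exact (tlim.eventually hmem).mono fun n hn =>
        le_of_not_gt fun h => hn.not_ge (ENNReal.ofReal_le_ofReal h.le)
    · have hlim : Tendsto t atTop (𝓝 L.toReal) := by
        have h := (ENNReal.tendsto_toReal hT).comp tlim
        exact h.congr fun n => ENNReal.toReal_ofReal (tnn n)
      exact tendsto_nhdsWithin_of_tendsto_nhds_of_eventually_within _ hlim
        (Eventually.of_forall fun n => tltR hT n)
  have mF : Tendsto (fun n => t n + ℓ n / 2) atTop
      (if L = ∞ then atTop else 𝓝[<] L.toReal) := by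
    have hmlt : ∀ n, t n + ℓ n / 2 < t (n + 1) := fun n => by
      rw [htrec]; linarith [hℓ n]
    have hmge : ∀ n, t n ≤ t n + ℓ n / 2 := fun n => by linarith [hℓ n]
    split_ifs with hT
    · have htF := tF
      rw [if_pos hT] at htF
      exact tendsto_atTop_mono hmge htF
    · have hlim : Tendsto t atTop (𝓝 L.toReal) := by
        have h := (ENNReal.tendsto_toReal hT).comp tlim
        exact h.congr fun n => ENNReal.toReal_ofReal (tnn n)
      have hlim' : Tendsto (fun n => t (n + 1)) atTop (𝓝 L.toReal) :=
        hlim.comp (tendsto_add_atTop_nat 1)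
      have hmid : Tendsto (fun n => t n + ℓ n / 2) atTop (𝓝 L.toReal) :=
        tendsto_of_tendsto_of_tendsto_of_le_of_le hlim hlim' hmge fun n => (hmlt n).le
      exact tendsto_nhdsWithin_of_tendsto_nhds_of_eventually_within _ hmid
        (Eventually.of_forall fun n => (hmlt n).trans (tltR hT (n + 1)))
  constructor
  · -- continuous → discrete
    intro hΦ
    have h1 : Tendsto (fun n => Phi L μ (t n)) atTop (𝓝 0) := hΦ.comp tF
    have h2 : Tendsto (fun n => Phi L μ (t (n + 1))) atTop (𝓝 0) :=
      hΦ.comp (tF.comp (tendsto_add_atTop_nat 1))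
    have hm : Tendsto (fun n => Phi L μ (t n + ℓ n / 2)) atTop (𝓝 0) := hΦ.comp mF
    -- lower bound of Φ at midpoints
    have low : ∀ n, ENNReal.ofReal (ℓ n ^ 2) ≤ 4 * Phi L μ (t n + ℓ n / 2) := by
      intro n
      have hmlt : t n + ℓ n / 2 < t (n + 1) := by rw [htrec]; linarith [hℓ n]
      have hA' : ENNReal.ofReal (cc s n * (ℓ n / 2))
          ≤ ∫⁻ y in Set.Ioo 0 (t n + ℓ n / 2), ENNReal.ofReal (μ y) := by
        refine le_trans (le_of_eq ?_)
          (lintegral_mono_set (Set.Ioo_subset_Ioo_left (tnn n)))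
        have h1' : ∫⁻ y in Set.Ioo (t n) (t n + ℓ n / 2), ENNReal.ofReal (μ y)
            = ∫⁻ _ in Set.Ioo (t n) (t n + ℓ n / 2), ENNReal.ofReal (cc s n) := by
          refine setLIntegral_congr_fun measurableSet_Ioo (fun y hy => ?_)
          rw [hμ n y ⟨hy.1.le, hy.2.trans hmlt⟩]; rfl
        rw [h1', setLIntegral_const, Real.volume_Ioo,
          ← ENNReal.ofReal_mul (hcpos n).le]
        congr 1
        ring
      have hB' : ENNReal.ofReal ((cc s n)⁻¹ * (ℓ n / 2))
          ≤ ∫⁻ y in {y : ℝ | t n + ℓ n / 2 < y ∧ ENNReal.ofReal y < L},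
              ENNReal.ofReal ((μ y)⁻¹) := by
        have hsub : Set.Ioo (t n + ℓ n / 2) (t (n + 1))
            ⊆ {y : ℝ | t n + ℓ n / 2 < y ∧ ENNReal.ofReal y < L} := by
          rintro y ⟨hy1, hy2⟩
          exact ⟨hy1, lt_of_le_of_lt (ENNReal.ofReal_le_ofReal hy2.le) (tltL (n + 1))⟩
        refine le_trans (le_of_eq ?_) (lintegral_mono_set hsub)
        have h1' : ∫⁻ y in Set.Ioo (t n + ℓ n / 2) (t (n + 1)), ENNReal.ofReal ((μ y)⁻¹)
            = ∫⁻ _ in Set.Ioo (t n + ℓ n / 2) (t (n + 1)), ENNReal.ofReal ((cc s n)⁻¹) := by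
          refine setLIntegral_congr_fun measurableSet_Ioo (fun y hy => ?_)
          have hyIco : y ∈ Set.Ico (t n) (t (n + 1)) := ⟨by linarith [hy.1, hℓ n], hy.2⟩
          rw [hμ n y hyIco]; rfl
        rw [h1', setLIntegral_const, Real.volume_Ioo,
          ← ENNReal.ofReal_mul (inv_nonneg.2 (hcpos n).le)]
        congr 1
        rw [htrec]
        ring
      have hprod : ENNReal.ofReal (ℓ n ^ 2 / 4) ≤ Phi L μ (t n + ℓ n / 2) := by
        simp only [Phi]
        refine le_trans (le_of_eq ?_) (mul_le_mul' hA' hB')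
        rw [← ENNReal.ofReal_mul (mul_nonneg (hcpos n).le (by linarith [hℓ n]))]
        congr 1
        have hne : cc s n ≠ 0 := (hcpos n).ne'
        field_simp
        ring
      calc ENNReal.ofReal (ℓ n ^ 2) = 4 * ENNReal.ofReal (ℓ n ^ 2 / 4) := by
            rw [show (4 : ℝ≥0∞) = ENNReal.ofReal 4 by norm_num,
              ← ENNReal.ofReal_mul (by norm_num)]
            congr 1
            ring
        _ ≤ 4 * Phi L μ (t n + ℓ n / 2) := mul_le_mul_right hprod _
    have h3 : Tendsto (fun n => ENNReal.ofReal (ℓ n ^ 2)) atTop (𝓝 0) := by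
      have h4 : Tendsto (fun n => 4 * Phi L μ (t n + ℓ n / 2)) atTop (𝓝 0) := by
        have h5 := ENNReal.Tendsto.const_mul (a := 4) hm (Or.inr (by norm_num))
        simpa using h5
      exact tendsto_of_tendsto_of_tendsto_of_le_of_le tendsto_const_nhds h4
        (fun n => zero_le) low
    have hΦt : ∀ n, Phi L μ (t n) = PP s ℓ n * QQ s ℓ n := fun n => by
      simp only [Phi]
      rw [hA n, hB n]
    have hup : ∀ n, PP s ℓ (n + 1) * QQ s ℓ n
        ≤ Phi L μ (t n) + 2 * Phi L μ (t (n + 1)) + ENNReal.ofReal (ℓ n ^ 2) := by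
      intro n
      rw [hΦt n, hΦt (n + 1)]
      exact key n
    have hsum : Tendsto
        (fun n => Phi L μ (t n) + 2 * Phi L μ (t (n + 1)) + ENNReal.ofReal (ℓ n ^ 2))
        atTop (𝓝 0) := by
      have h2' : Tendsto (fun n => 2 * Phi L μ (t (n + 1))) atTop (𝓝 0) := by
        have h5 := ENNReal.Tendsto.const_mul (a := 2) h2 (Or.inr (by norm_num))
        simpa using h5
      have h6 := (h1.add h2').add h3
      simpa using h6
    exact tendsto_of_tendsto_of_tendsto_of_le_of_le tendsto_const_nhds hsum
      (fun n => zero_le) hup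
  · -- discrete → continuous
    intro hD
    rw [ENNReal.tendsto_nhds_zero]
    intro ε hε
    obtain ⟨N, hN⟩ := eventually_atTop.1 ((ENNReal.tendsto_nhds_zero.1 hD) ε hε)
    have claim : ∀ x : ℝ, t N ≤ x → ENNReal.ofReal x < L → Phi L μ x ≤ ε := by
      intro x hx hxL
      obtain ⟨n, hn1, hn2⟩ := exidx x ((tnn N).trans hx) hxL
      have hNn : N ≤ n := by
        by_contra h
        push_neg at h
        exact absurd (hx.trans_lt hn2) (not_lt.2 (tmono.monotone h))
      have hApre : (∫⁻ y in Set.Ioo 0 x, ENNReal.ofReal (μ y)) ≤ PP s ℓ (n + 1) := by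
        rw [← hA (n + 1)]
        exact lintegral_mono_set (Set.Ioo_subset_Ioo_right hn2.le)
      have hBpre : (∫⁻ y in {y : ℝ | x < y ∧ ENNReal.ofReal y < L},
          ENNReal.ofReal ((μ y)⁻¹)) ≤ QQ s ℓ n := by
        rw [← hB n]
        exact lintegral_mono_set fun y hy => ⟨hn1.trans_lt hy.1, hy.2⟩
      calc Phi L μ x ≤ PP s ℓ (n + 1) * QQ s ℓ n := mul_le_mul' hApre hBpre
        _ ≤ ε := hN n hNn
    split_ifs with hT
    · filter_upwards [eventually_ge_atTop (t N)] with x hx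
      exact claim x hx (hT ▸ ENNReal.ofReal_lt_top)
    · have hmem : Set.Ioo (t N) L.toReal ∈ 𝓝[<] L.toReal :=
        Ioo_mem_nhdsLT_of_mem ⟨tltR hT N, le_refl _⟩
      filter_upwards [hmem] with x hx
      refine claim x hx.1.le ?_
      exact (ENNReal.ofReal_lt_iff_lt_toReal (le_trans (tnn N) hx.1.le) hT).2 hx.2
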